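/- Let K ⊇ R be a Hopf–Galois extension over a finite-dimensional Hopf algebra H', and W a left K-module. Then End_R(W) is a left H'-module algebra with action (h·T)(w) = h^{[1]} T(h^{[2]} w), and the invariants End_R(W)^{H'} coincide with End_K(W). -/
import Mathlib


open TensorProduct

/-- Relations of `K ⊗_R K`, `R = K^{co H'}`. -/
noncomputable def galRel (k : Type*) {H' K : Type*} [CommSemiring k] [Semiring H']
    [Algebra k H'] [Ring K] [Algebra k K] (lam : K →ₐ[k] H' ⊗[k] K) :
    Submodule k (K ⊗[k] K) :=
  Submodule.span k {z | ∃ x y r : K,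
    lam r = (1 : H') ⊗ₜ[k] r ∧ z = (x * r) ⊗ₜ[k] y - x ⊗ₜ[k] (r * y)}

/-- The canonical Galois map on `K ⊗ K`: `x ⊗ y ↦ x₍₋₁₎ ⊗ x₍₀₎ y`. -/
noncomputable def galBeta (k : Type*) {H' K : Type*} [CommSemiring k] [Semiring H']
    [Algebra k H'] [Ring K] [Algebra k K] (lam : K →ₐ[k] H' ⊗[k] K) :
    K ⊗[k] K →ₗ[k] H' ⊗[k] K :=
  LinearMap.lTensor H' (LinearMap.mul' k K) ∘ₗ
    (TensorProduct.assoc k H' K K).toLinearMap ∘ₗ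
      LinearMap.rTensor K lam.toLinearMap

/-- Scalar action of `a : K` on a `K`-module `W` as a `k`-linear endomorphism. -/
noncomputable def sm (k : Type*) {K W : Type*} [CommSemiring k] [Semiring K]
    [AddCommMonoid W] [Module k W] [Module K W] [SMulCommClass K k W] (a : K) :
    W →ₗ[k] W where
  toFun w := a • w
  map_add' w w' := smul_add a w w'
  map_smul' c w := smul_comm a c w

section Aux
set_option linter.unusedSectionVars false
set_option maxHeartbeats 1000000
set_option synthInstance.maxHeartbeats 400000

variable {k H' K : Type*} [Field k] [Ring H'] [HopfAlgebra k H']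
  [Ring K] [Algebra k K] (lam : K →ₐ[k] H' ⊗[k] K)
  {W : Type*} [AddCommGroup W] [Module k W] [Module K W]
  [IsScalarTower k K W] [SMulCommClass K k W]

@[simp] lemma sm_apply (a : K) (w : W) : sm k a w = a • w := rfl

lemma sm_one : sm k (1 : K) = (LinearMap.id : W →ₗ[k] W) := by
  ext w; simp

lemma sm_mul (a b : K) : sm k (a * b) = (sm k a ∘ₗ sm k b : W →ₗ[k] W) := by
  ext w; simp [mul_smul]

lemma sm_add (a b : K) : sm k (a + b) = (sm k a + sm k b : W →ₗ[k] W) := by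
  ext w; simp [add_smul]

lemma sm_smulc (c : k) (a : K) : sm k (c • a) = c • (sm k a : W →ₗ[k] W) := by
  ext w; simp [smul_assoc]

/-- The bilinear evaluation `x ⊗ y ↦ sm x ∘ T ∘ sm y`. -/
noncomputable def Phi (T : W →ₗ[k] W) : K ⊗[k] K →ₗ[k] (W →ₗ[k] W) :=
  TensorProduct.lift (LinearMap.mk₂ k (fun x y => sm k x ∘ₗ T ∘ₗ sm k y)
    (fun a b y => by ext w; simp [add_smul])
    (fun c a y => by ext w; simp [smul_assoc])
    (fun a b y => by ext w; simp [add_smul])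
    (fun c a y => by ext w; simp [smul_assoc]))

@[simp] lemma Phi_tmul (T : W →ₗ[k] W) (x y : K) :
    Phi (k := k) T (x ⊗ₜ[k] y) = sm k x ∘ₗ T ∘ₗ sm k y := rfl

lemma galBeta_tmul (x y : K) :
    galBeta k lam (x ⊗ₜ[k] y) = lam x * ((1 : H') ⊗ₜ[k] y) := by
  have aux : ∀ u : H' ⊗[k] K,
      (LinearMap.lTensor H' (LinearMap.mul' k K))
        ((TensorProduct.assoc k H' K K).toLinearMap (u ⊗ₜ[k] y)) = u * ((1 : H') ⊗ₜ[k] y) := by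
    intro u
    induction u using TensorProduct.induction_on with
    | zero => rw [zero_tmul, map_zero, map_zero, zero_mul]
    | tmul a b => simp [Algebra.TensorProduct.tmul_mul_tmul]
    | add u v hu hv =>
        rw [add_tmul, map_add, map_add, hu, hv, add_mul]
  simp only [galBeta, LinearMap.comp_apply, LinearMap.rTensor_tmul,
    AlgHom.toLinearMap_apply]
  exact aux (lam x)

/-- `Phi T` kills the Galois relations when `T` is `R`-linear. -/
lemma Phi_eq_zero_of_mem (T : W →ₗ[k] W)
    (hT : ∀ r : K, lam r = (1 : H') ⊗ₜ[k] r → ∀ w : W, T (r • w) = r • T w)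
    {z : K ⊗[k] K} (hz : z ∈ galRel k lam) : Phi (k := k) T z = 0 := by
  induction hz using Submodule.span_induction with
  | mem z hzm =>
      obtain ⟨x, y, r, hr, rfl⟩ := hzm
      ext w
      simp only [map_sub, Phi_tmul, LinearMap.sub_apply, LinearMap.comp_apply,
        sm_apply, LinearMap.zero_apply]
      rw [mul_smul, mul_smul, hT r hr, sub_self]
  | zero => simp
  | add u v _ _ hu hv => rw [map_add, hu, hv, add_zero]
  | smul c u _ hu => rw [map_smul, hu, smul_zero]


variable (βbar : ((K ⊗[k] K) ⧸ galRel k lam) →ₗ[k] H' ⊗[k] K)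

lemma ker_galBeta (hfac : βbar ∘ₗ (galRel k lam).mkQ = galBeta k lam)
    (hbij : Function.Bijective βbar) :
    LinearMap.ker (galBeta k lam) = galRel k lam := by
  ext z
  rw [LinearMap.mem_ker, ← hfac, LinearMap.comp_apply]
  constructor
  · intro h
    have h0 : βbar ((galRel k lam).mkQ z) = βbar 0 := by simpa using h
    have := hbij.1 h0
    rw [Submodule.mkQ_apply, Submodule.Quotient.mk_eq_zero] at this
    exact this
  · intro h
    have : (galRel k lam).mkQ z = 0 := by
      rw [Submodule.mkQ_apply, Submodule.Quotient.mk_eq_zero]; exact h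
    rw [this, map_zero]

lemma Phi_congr (hfac : βbar ∘ₗ (galRel k lam).mkQ = galBeta k lam)
    (hbij : Function.Bijective βbar) (T : W →ₗ[k] W)
    (hT : ∀ r : K, lam r = (1 : H') ⊗ₜ[k] r → ∀ w : W, T (r • w) = r • T w)
    {z z' : K ⊗[k] K} (h : galBeta k lam z = galBeta k lam z') :
    Phi (k := k) T z = Phi (k := k) T z' := by
  have hmem : z - z' ∈ galRel k lam := by
    rw [← ker_galBeta lam βbar hfac hbij, LinearMap.mem_ker, map_sub, h, sub_self]
  have := Phi_eq_zero_of_mem lam T hT hmem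
  rw [map_sub, sub_eq_zero] at this
  exact this

lemma galBeta_surj (hfac : βbar ∘ₗ (galRel k lam).mkQ = galBeta k lam)
    (hbij : Function.Bijective βbar) :
    Function.Surjective (galBeta k lam) := by
  intro u
  obtain ⟨q, hq⟩ := hbij.2 u
  obtain ⟨z, rfl⟩ := Submodule.mkQ_surjective (galRel k lam) q
  exact ⟨z, by rw [← hfac]; exact hq⟩

lemma pi_eq_iff (hfac : βbar ∘ₗ (galRel k lam).mkQ = galBeta k lam)
    (hbij : Function.Bijective βbar) (z : K ⊗[k] K) (h : H') :
    (galRel k lam).mkQ z = Function.invFun βbar (h ⊗ₜ[k] (1 : K))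
      ↔ galBeta k lam z = h ⊗ₜ[k] (1 : K) := by
  have hγ : βbar (Function.invFun βbar (h ⊗ₜ[k] (1 : K))) = h ⊗ₜ[k] (1 : K) :=
    Function.invFun_eq (hbij.2 _)
  constructor
  · intro hz
    rw [← hfac, LinearMap.comp_apply, hz, hγ]
  · intro hz
    apply hbij.1
    rw [hγ, ← hz, ← hfac, LinearMap.comp_apply]

/-- `(ε ⊗ id)` collapse map. -/
noncomputable def epsK : H' ⊗[k] K →ₗ[k] K :=
  (TensorProduct.lid k K).toLinearMap ∘ₗ LinearMap.rTensor K (Coalgebra.counit (R := k))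

@[simp] lemma epsK_tmul (h : H') (c : K) :
    epsK (k := k) (h ⊗ₜ[k] c) = Coalgebra.counit (R := k) h • c := by
  simp [epsK]

lemma epsK_mul_one_tmul (u : H' ⊗[k] K) (y : K) :
    epsK (k := k) (u * ((1 : H') ⊗ₜ[k] y)) = epsK (k := k) u * y := by
  induction u using TensorProduct.induction_on with
  | zero => rw [zero_mul, map_zero, zero_mul]
  | tmul h c => simp [Algebra.TensorProduct.tmul_mul_tmul, smul_mul_assoc]
  | add u v hu hv => rw [add_mul, map_add, hu, hv, map_add, add_mul]

lemma galBeta_lTensor_mulRight (u : K ⊗[k] K) (r : K) :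
    galBeta k lam ((LinearMap.lTensor K (LinearMap.mulRight k r)) u)
      = galBeta k lam u * ((1 : H') ⊗ₜ[k] r) := by
  induction u using TensorProduct.induction_on with
  | zero => rw [map_zero, map_zero, zero_mul]
  | tmul x y =>
      rw [LinearMap.lTensor_tmul, galBeta_tmul, galBeta_tmul]
      simp only [LinearMap.mulRight_apply]
      rw [show ((1 : H') ⊗ₜ[k] (y * r) : H' ⊗[k] K)
          = ((1 : H') ⊗ₜ[k] y) * ((1 : H') ⊗ₜ[k] r) by
        rw [Algebra.TensorProduct.tmul_mul_tmul, one_mul], mul_assoc]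
  | add u v hu hv => rw [map_add, map_add, hu, hv, map_add, add_mul]

/-- Trilinear evaluation `x ⊗ y ⊗ z ↦ sm x ∘ T ∘ sm y ∘ U ∘ sm z`. -/
noncomputable def triF (T U : W →ₗ[k] W) : (K ⊗[k] K) ⊗[k] K →ₗ[k] (W →ₗ[k] W) :=
  TensorProduct.lift (LinearMap.mk₂ k
    (fun u c => Phi (k := k) T u ∘ₗ U ∘ₗ sm k c)
    (fun u u' c => by
      show Phi (k := k) T (u + u') ∘ₗ U ∘ₗ sm k c = _
      rw [map_add, LinearMap.add_comp])
    (fun s u c => by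
      show Phi (k := k) T (s • u) ∘ₗ U ∘ₗ sm k c = _
      rw [map_smul, LinearMap.smul_comp])
    (fun u c c' => by ext w; simp [add_smul]
    )
    (fun s u c => by ext w; simp [smul_assoc]))

@[simp] lemma triF_tmul (T U : W →ₗ[k] W) (u : K ⊗[k] K) (c : K) :
    triF (k := k) T U (u ⊗ₜ[k] c) = Phi (k := k) T u ∘ₗ U ∘ₗ sm k c := by
  rw [triF, TensorProduct.lift.tmul]; rfl

lemma ker_rTensor_galBeta (hfac : βbar ∘ₗ (galRel k lam).mkQ = galBeta k lam)
    (hbij : Function.Bijective βbar) :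
    LinearMap.ker (LinearMap.rTensor K (galBeta k lam))
      = LinearMap.range (LinearMap.rTensor K (galRel k lam).subtype) := by
  have hex : Function.Exact ((galRel k lam).subtype) (galBeta k lam) :=
    LinearMap.exact_iff.mpr
      (by rw [ker_galBeta lam βbar hfac hbij, Submodule.range_subtype])
  exact LinearMap.exact_iff.mp (Module.Flat.rTensor_exact K hex)

lemma ker_lTensor_galBeta (hfac : βbar ∘ₗ (galRel k lam).mkQ = galBeta k lam)
    (hbij : Function.Bijective βbar) :
    LinearMap.ker (LinearMap.lTensor H' (galBeta k lam))
      = LinearMap.range (LinearMap.lTensor H' (galRel k lam).subtype) := by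
  have hex : Function.Exact ((galRel k lam).subtype) (galBeta k lam) :=
    LinearMap.exact_iff.mpr
      (by rw [ker_galBeta lam βbar hfac hbij, Submodule.range_subtype])
  exact LinearMap.exact_iff.mp (Module.Flat.lTensor_exact H' hex)


/-- `triF T U` only depends on the "double beta" image when `T, U` are `R`-linear. -/
lemma triF_congr (hfac : βbar ∘ₗ (galRel k lam).mkQ = galBeta k lam)
    (hbij : Function.Bijective βbar) (T U : W →ₗ[k] W)
    (hT : ∀ r : K, lam r = (1 : H') ⊗ₜ[k] r → ∀ w : W, T (r • w) = r • T w)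
    (hU : ∀ r : K, lam r = (1 : H') ⊗ₜ[k] r → ∀ w : W, U (r • w) = r • U w)
    {z z' : (K ⊗[k] K) ⊗[k] K}
    (hB : (LinearMap.lTensor H' (galBeta k lam))
            ((TensorProduct.assoc k H' K K)
              ((LinearMap.rTensor K (galBeta k lam)) z))
        = (LinearMap.lTensor H' (galBeta k lam))
            ((TensorProduct.assoc k H' K K)
              ((LinearMap.rTensor K (galBeta k lam)) z'))) :
    triF (k := k) T U z = triF (k := k) T U z' := by
  -- `triF` vanishes on tensors coming from the relation submodule
  have hF0 : ∀ v : (galRel k lam) ⊗[k] K,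
      triF (k := k) T U ((LinearMap.rTensor K (galRel k lam).subtype) v) = 0 := by
    intro v
    induction v using TensorProduct.induction_on with
    | zero => rw [map_zero, map_zero]
    | tmul gr c =>
        rw [LinearMap.rTensor_tmul, triF_tmul, Submodule.coe_subtype,
          Phi_eq_zero_of_mem lam T hT gr.2, LinearMap.zero_comp]
    | add v v' hv hv' => rw [map_add, map_add, hv, hv', add_zero]
  have hFker : ∀ x, (LinearMap.rTensor K (galBeta k lam)) x = 0 →
      triF (k := k) T U x = 0 := by
    intro x hx
    have hx' : x ∈ LinearMap.range (LinearMap.rTensor K (galRel k lam).subtype) := by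
      rw [← ker_rTensor_galBeta lam βbar hfac hbij]; exact hx
    obtain ⟨v, rfl⟩ := hx'
    exact hF0 v
  -- a good preimage for anything in `H' ⊗ galRel`
  have hpre : ∀ v : H' ⊗[k] (galRel k lam),
      ∃ p : (K ⊗[k] K) ⊗[k] K,
        (LinearMap.rTensor K (galBeta k lam)) p
          = (TensorProduct.assoc k H' K K).symm
              ((LinearMap.lTensor H' (galRel k lam).subtype) v)
        ∧ triF (k := k) T U p = 0 := by
    intro v
    induction v using TensorProduct.induction_on with
    | zero => exact ⟨0, by rw [map_zero, map_zero, map_zero], by rw [map_zero]⟩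
    | tmul h gr =>
        have main : ∀ s ∈ galRel k lam, ∃ p : (K ⊗[k] K) ⊗[k] K,
            (LinearMap.rTensor K (galBeta k lam)) p
              = (TensorProduct.assoc k H' K K).symm (h ⊗ₜ[k] s)
            ∧ triF (k := k) T U p = 0 := by
          intro s hs
          induction hs using Submodule.span_induction with
          | mem s hsm =>
              obtain ⟨x, y, r, hr, rfl⟩ := hsm
              obtain ⟨u, hu⟩ := galBeta_surj lam βbar hfac hbij (h ⊗ₜ[k] x)
              refine ⟨(LinearMap.lTensor K (LinearMap.mulRight k r)) u ⊗ₜ[k] y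
                  - u ⊗ₜ[k] (r * y), ?_, ?_⟩
              · rw [map_sub, LinearMap.rTensor_tmul, LinearMap.rTensor_tmul,
                  galBeta_lTensor_mulRight, hu, tmul_sub, map_sub,
                  TensorProduct.assoc_symm_tmul, TensorProduct.assoc_symm_tmul]
                congr 2
                rw [Algebra.TensorProduct.tmul_mul_tmul, mul_one]
              · have key : ∀ u' : K ⊗[k] K,
                    triF (k := k) T U
                      (((LinearMap.lTensor K (LinearMap.mulRight k r)) u') ⊗ₜ[k] y)
                    = triF (k := k) T U (u' ⊗ₜ[k] (r * y)) := by
                  intro u'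
                  induction u' using TensorProduct.induction_on with
                  | zero => rw [map_zero, zero_tmul, zero_tmul, map_zero]
                  | tmul p q =>
                      rw [LinearMap.lTensor_tmul, triF_tmul, triF_tmul]
                      ext w
                      simp only [LinearMap.comp_apply, sm_apply, Phi_tmul,
                        LinearMap.mulRight_apply]
                      rw [mul_smul, mul_smul, hU r hr]
                  | add a b ha hb =>
                      rw [map_add, add_tmul, map_add, ha, hb, add_tmul, map_add]
                rw [map_sub, key u, sub_self]
          | zero =>
              exact ⟨0, by rw [map_zero, tmul_zero, map_zero], by rw [map_zero]⟩
          | add a b _ _ iha ihb =>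
              obtain ⟨p, hp1, hp2⟩ := iha
              obtain ⟨p', hp1', hp2'⟩ := ihb
              exact ⟨p + p', by rw [map_add, hp1, hp1', tmul_add, map_add],
                by rw [map_add, hp2, hp2', add_zero]⟩
          | smul c a _ iha =>
              obtain ⟨p, hp1, hp2⟩ := iha
              exact ⟨c • p, by rw [map_smul, hp1, tmul_smul, map_smul],
                by rw [map_smul, hp2, smul_zero]⟩
        obtain ⟨p, hp1, hp2⟩ := main gr.1 gr.2
        exact ⟨p, by rw [hp1, LinearMap.lTensor_tmul, Submodule.coe_subtype], hp2⟩
    | add v v' hv hv' =>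
        obtain ⟨p, hp1, hp2⟩ := hv
        obtain ⟨p', hp1', hp2'⟩ := hv'
        exact ⟨p + p', by rw [map_add, hp1, hp1', map_add, map_add],
          by rw [map_add, hp2, hp2', add_zero]⟩
  -- now conclude
  have hd : (LinearMap.lTensor H' (galBeta k lam))
      ((TensorProduct.assoc k H' K K)
        ((LinearMap.rTensor K (galBeta k lam)) (z - z'))) = 0 := by
    rw [map_sub, map_sub, map_sub, hB, sub_self]
  have hmem : (TensorProduct.assoc k H' K K)
      ((LinearMap.rTensor K (galBeta k lam)) (z - z'))
      ∈ LinearMap.range (LinearMap.lTensor H' (galRel k lam).subtype) := by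
    rw [← ker_lTensor_galBeta lam βbar hfac hbij]; exact hd
  obtain ⟨v, hv⟩ := hmem
  obtain ⟨p, hp1, hp2⟩ := hpre v
  have hgp : (LinearMap.rTensor K (galBeta k lam)) (z - z' - p) = 0 := by
    rw [map_sub, hp1, hv, LinearEquiv.symm_apply_apply, sub_self]
  have := hFker _ hgp
  rw [map_sub, map_sub, hp2, sub_zero, sub_eq_zero] at this
  exact this


lemma galBeta_sum {n : ℕ} (ha hb : Fin n → K) :
    galBeta k lam (∑ i, ha i ⊗ₜ[k] hb i) = ∑ i, lam (ha i) * ((1 : H') ⊗ₜ[k] hb i) := by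
  rw [map_sum]
  exact Finset.sum_congr rfl fun i _ => galBeta_tmul lam (ha i) (hb i)

lemma B2_tmul (u : H' ⊗[k] K) (z : K) :
    (LinearMap.lTensor H' (galBeta k lam)) ((TensorProduct.assoc k H' K K) (u ⊗ₜ[k] z))
      = (LinearMap.lTensor H' lam.toLinearMap) u
          * ((1 : H') ⊗ₜ[k] ((1 : H') ⊗ₜ[k] z)) := by
  induction u using TensorProduct.induction_on with
  | zero => rw [zero_tmul, map_zero, map_zero, map_zero, zero_mul]
  | tmul h c =>
      rw [TensorProduct.assoc_tmul, LinearMap.lTensor_tmul, LinearMap.lTensor_tmul,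
        galBeta_tmul, Algebra.TensorProduct.tmul_mul_tmul, mul_one]
      rfl
  | add u v hu hv =>
      rw [add_tmul, map_add, map_add, hu, hv, map_add, add_mul]

lemma assoc_comul_mul (u : H' ⊗[k] K) (z : K) :
    (TensorProduct.assoc k H' H' K) ((LinearMap.rTensor K (Coalgebra.comul (R := k))) u)
        * ((1 : H') ⊗ₜ[k] ((1 : H') ⊗ₜ[k] z))
      = (TensorProduct.assoc k H' H' K)
          ((LinearMap.rTensor K (Coalgebra.comul (R := k))) (u * ((1 : H') ⊗ₜ[k] z))) := by
  have sub : ∀ (v : H' ⊗[k] H') (b : K),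
      (TensorProduct.assoc k H' H' K) (v ⊗ₜ[k] b) * ((1 : H') ⊗ₜ[k] ((1 : H') ⊗ₜ[k] z))
        = (TensorProduct.assoc k H' H' K) (v ⊗ₜ[k] (b * z)) := by
    intro v b
    induction v using TensorProduct.induction_on with
    | zero => rw [zero_tmul, map_zero, zero_mul, zero_tmul, map_zero]
    | tmul a1 a2 =>
        rw [TensorProduct.assoc_tmul, TensorProduct.assoc_tmul,
          Algebra.TensorProduct.tmul_mul_tmul, mul_one,
          Algebra.TensorProduct.tmul_mul_tmul, mul_one]
    | add v v' hv hv' =>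
        rw [add_tmul, map_add, add_mul, hv, hv', add_tmul, map_add]
  induction u using TensorProduct.induction_on with
  | zero => rw [map_zero, map_zero, zero_mul, zero_mul, map_zero, map_zero]
  | tmul a b =>
      rw [Algebra.TensorProduct.tmul_mul_tmul, mul_one, LinearMap.rTensor_tmul,
        LinearMap.rTensor_tmul, sub]
  | add u v hu hv =>
      rw [map_add, map_add, add_mul, hu, hv, add_mul, map_add, map_add]

end Aux

lemma exists_fin_rep {k M N : Type*} [CommSemiring k] [AddCommMonoid M] [AddCommMonoid N]
    [Module k M] [Module k N] (u : M ⊗[k] N) :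
    ∃ (n : ℕ) (a : Fin n → M) (b : Fin n → N), u = ∑ i, a i ⊗ₜ[k] b i := by
  induction u using TensorProduct.induction_on with
  | zero => exact ⟨0, ![], ![], by simp⟩
  | tmul x y => exact ⟨1, ![x], ![y], by simp⟩
  | add u v hu hv =>
      obtain ⟨n, a, b, rfl⟩ := hu
      obtain ⟨m, c, d, rfl⟩ := hv
      refine ⟨n + m, Fin.append a c, Fin.append b d, ?_⟩
      rw [Fin.sum_univ_add]
      congr 1
      · exact Finset.sum_congr rfl fun i _ => by
          rw [Fin.append_left, Fin.append_left]
      · exact Finset.sum_congr rfl fun i _ => by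
          rw [Fin.append_right, Fin.append_right]


set_option maxHeartbeats 2000000
set_option synthInstance.maxHeartbeats 400000

/-- `End_R(W)` is a left `H'`-module algebra via `(h·T)(w) = h^{[1]} T(h^{[2]} w)`, and
its invariants are `End_K(W)`. -/
theorem stmt16 {k H' K : Type*} [Field k] [Ring H'] [HopfAlgebra k H']
    [FiniteDimensional k H'] [Ring K] [Algebra k K] [FiniteDimensional k K]
    (lam : K →ₐ[k] H' ⊗[k] K)
    (hcounit : ∀ x : K,
      (TensorProduct.lid k K) ((LinearMap.rTensor K (Coalgebra.counit (R := k))) (lam x)) = x)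
    (hcoassoc : ∀ x : K,
      (LinearMap.rTensor K (Coalgebra.comul (R := k))) (lam x)
        = (TensorProduct.assoc k H' H' K).symm
            ((LinearMap.lTensor H' lam.toLinearMap) (lam x)))
    (βbar : ((K ⊗[k] K) ⧸ galRel k lam) →ₗ[k] H' ⊗[k] K)
    (hfac : βbar ∘ₗ (galRel k lam).mkQ = galBeta k lam)
    (hbij : Function.Bijective βbar)
    -- a left `K`-module `W`
    (W : Type*) [AddCommGroup W] [Module k W] [Module K W]
    [IsScalarTower k K W] [SMulCommClass K k W] [FiniteDimensional k W] :
    let π : K ⊗[k] K →ₗ[k] (K ⊗[k] K) ⧸ galRel k lam := (galRel k lam).mkQ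
    let γ : H' → (K ⊗[k] K) ⧸ galRel k lam :=
      fun h => Function.invFun βbar (h ⊗ₜ[k] (1 : K))
    -- `T ∈ End_R(W)` iff it commutes with the action of coinvariants
    let EndR : (W →ₗ[k] W) → Prop :=
      fun T => ∀ r : K, lam r = (1 : H') ⊗ₜ[k] r → ∀ w : W, T (r • w) = r • T w
    -- `(h · T)` computed from a representative of `h^{[1]} ⊗ h^{[2]}`
    let actOf : ∀ n : ℕ, (Fin n → K) → (Fin n → K) → (W →ₗ[k] W) → (W →ₗ[k] W) :=
      fun n ha hb T => ∑ i, sm k (ha i) ∘ₗ T ∘ₗ sm k (hb i)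
    -- well-definedness and `R`-linearity of the action
    (∀ (h : H') (n : ℕ) (ha hb : Fin n → K), π (∑ i, ha i ⊗ₜ[k] hb i) = γ h →
      ∀ T : W →ₗ[k] W, EndR T → EndR (actOf n ha hb T)) ∧
    (∀ (h : H') (n m : ℕ) (ha hb : Fin n → K) (ha' hb' : Fin m → K),
      π (∑ i, ha i ⊗ₜ[k] hb i) = γ h → π (∑ j, ha' j ⊗ₜ[k] hb' j) = γ h →
      ∀ T : W →ₗ[k] W, EndR T → actOf n ha hb T = actOf m ha' hb' T) ∧
    -- it is an action: `(th) · T = t · (h · T)`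
    (∀ (t h : H') (n m l : ℕ) (ta tb : Fin n → K) (ha hb : Fin m → K)
        (pa pb : Fin l → K),
      π (∑ i, ta i ⊗ₜ[k] tb i) = γ t → π (∑ j, ha j ⊗ₜ[k] hb j) = γ h →
      π (∑ j, pa j ⊗ₜ[k] pb j) = γ (t * h) →
      ∀ T : W →ₗ[k] W, EndR T →
        actOf l pa pb T = actOf n ta tb (actOf m ha hb T)) ∧
    -- module-algebra property: `h · (T U) = (h₁ · T)(h₂ · U)`
    (∀ (h : H') (n : ℕ) (ha hb : Fin n → K), π (∑ i, ha i ⊗ₜ[k] hb i) = γ h →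
      ∀ (m : ℕ) (c1 c2 : Fin m → H'),
        Coalgebra.comul (R := k) h = ∑ j, c1 j ⊗ₜ[k] c2 j →
      ∀ (l : ℕ) (pa pb qa qb : Fin m → Fin l → K),
        (∀ j, π (∑ s, pa j s ⊗ₜ[k] pb j s) = γ (c1 j)) →
        (∀ j, π (∑ s, qa j s ⊗ₜ[k] qb j s) = γ (c2 j)) →
      ∀ T U : W →ₗ[k] W, EndR T → EndR U →
        actOf n ha hb (T ∘ₗ U)
          = ∑ j, (actOf l (pa j) (pb j) T) ∘ₗ (actOf l (qa j) (qb j) U)) ∧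
    -- the invariants of `End_R(W)` are exactly `End_K(W)`
    (∀ T : W →ₗ[k] W, EndR T →
      ((∀ (h : H') (n : ℕ) (ha hb : Fin n → K), π (∑ i, ha i ⊗ₜ[k] hb i) = γ h →
          actOf n ha hb T = Coalgebra.counit (R := k) h • T)
        ↔ (∀ (a : K) (w : W), T (a • w) = a • T w))) := by
  intro π γ EndR actOf
  have hπγ : ∀ (z : K ⊗[k] K) (h : H'),
      π z = γ h ↔ galBeta k lam z = h ⊗ₜ[k] (1 : K) :=
    pi_eq_iff lam βbar hfac hbij
  have hact : ∀ (n : ℕ) (ha hb : Fin n → K) (T : W →ₗ[k] W),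
      actOf n ha hb T = Phi (k := k) T (∑ i, ha i ⊗ₜ[k] hb i) := by
    intro n ha hb T
    rw [map_sum]
    rfl
  have hcomm : ∀ (h : H') (c : K),
      (h ⊗ₜ[k] (1 : K)) * ((1 : H') ⊗ₜ[k] c) = ((1 : H') ⊗ₜ[k] c) * (h ⊗ₜ[k] (1 : K)) := by
    intro h c
    rw [Algebra.TensorProduct.tmul_mul_tmul, Algebra.TensorProduct.tmul_mul_tmul,
      one_mul, mul_one, one_mul, mul_one]
  refine ⟨?_, ?_, ?_, ?_, ?_⟩
  · -- (1) EndR is preserved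
    intro h n ha hb hrep T hT r hr w
    have hβ : galBeta k lam (∑ i, ha i ⊗ₜ[k] hb i) = h ⊗ₜ[k] (1 : K) := (hπγ _ _).1 hrep
    have h1 : galBeta k lam (∑ i, ha i ⊗ₜ[k] (hb i * r))
        = galBeta k lam (∑ i, (r * ha i) ⊗ₜ[k] hb i) := by
      rw [galBeta_sum, galBeta_sum]
      have e1 : ∀ i : Fin n, lam (ha i) * ((1 : H') ⊗ₜ[k] (hb i * r))
          = lam (ha i) * ((1 : H') ⊗ₜ[k] hb i) * ((1 : H') ⊗ₜ[k] r) := by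
        intro i
        rw [mul_assoc, Algebra.TensorProduct.tmul_mul_tmul, one_mul]
      have e2 : ∀ i : Fin n, lam (r * ha i) * ((1 : H') ⊗ₜ[k] hb i)
          = ((1 : H') ⊗ₜ[k] r) * (lam (ha i) * ((1 : H') ⊗ₜ[k] hb i)) := by
        intro i
        rw [map_mul, hr, mul_assoc]
      rw [Finset.sum_congr rfl fun i _ => e1 i, ← Finset.sum_mul,
        ← galBeta_sum, hβ, Finset.sum_congr rfl fun i _ => e2 i, ← Finset.mul_sum,
        ← galBeta_sum, hβ, hcomm]
    have hPhi := Phi_congr lam βbar hfac hbij T hT h1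
    have e3 : actOf n ha hb T (r • w)
        = Phi (k := k) T (∑ i, ha i ⊗ₜ[k] (hb i * r)) w := by
      rw [map_sum]
      simp only [actOf, LinearMap.sum_apply, LinearMap.comp_apply, sm_apply,
        Phi_tmul, mul_smul]
    have e4 : Phi (k := k) T (∑ i, (r * ha i) ⊗ₜ[k] hb i) w
        = r • actOf n ha hb T w := by
      rw [map_sum]
      simp only [actOf, LinearMap.sum_apply, LinearMap.comp_apply, sm_apply,
        Phi_tmul, mul_smul, Finset.smul_sum]
    rw [e3, hPhi, e4]
  · -- (2) well-definedness
    intro h n m ha hb ha' hb' h1 h2 T hT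
    rw [hact, hact]
    exact Phi_congr lam βbar hfac hbij T hT (by rw [(hπγ _ _).1 h1, (hπγ _ _).1 h2])
  · -- (3) action property
    intro t h n m l ta tb ha hb pa pb ht hh htp T hT
    have hβt : galBeta k lam (∑ i, ta i ⊗ₜ[k] tb i) = t ⊗ₜ[k] (1 : K) := (hπγ _ _).1 ht
    have hβh : galBeta k lam (∑ j, ha j ⊗ₜ[k] hb j) = h ⊗ₜ[k] (1 : K) := (hπγ _ _).1 hh
    have hβp : galBeta k lam (∑ j, pa j ⊗ₜ[k] pb j) = (t * h) ⊗ₜ[k] (1 : K) :=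
      (hπγ _ _).1 htp
    have eR : actOf n ta tb (actOf m ha hb T)
        = Phi (k := k) T (∑ i, ∑ j, (ta i * ha j) ⊗ₜ[k] (hb j * tb i)) := by
      ext w
      rw [map_sum]
      simp only [actOf, LinearMap.sum_apply, LinearMap.comp_apply, sm_apply,
        map_sum, Phi_tmul, Finset.smul_sum, mul_smul]
    have hβq : galBeta k lam (∑ i, ∑ j, (ta i * ha j) ⊗ₜ[k] (hb j * tb i))
        = (t * h) ⊗ₜ[k] (1 : K) := by
      rw [map_sum]
      have inner : ∀ i : Fin n, galBeta k lam (∑ j, (ta i * ha j) ⊗ₜ[k] (hb j * tb i))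
          = lam (ta i) * ((1 : H') ⊗ₜ[k] tb i) * (h ⊗ₜ[k] (1 : K)) := by
        intro i
        rw [galBeta_sum]
        have e1 : ∀ j : Fin m, lam (ta i * ha j) * ((1 : H') ⊗ₜ[k] (hb j * tb i))
            = lam (ta i) * (lam (ha j) * ((1 : H') ⊗ₜ[k] hb j)) * ((1 : H') ⊗ₜ[k] tb i) := by
          intro j
          rw [map_mul, mul_assoc, mul_assoc, mul_assoc,
            Algebra.TensorProduct.tmul_mul_tmul, one_mul]
        rw [Finset.sum_congr rfl fun j _ => e1 j, ← Finset.sum_mul, ← Finset.mul_sum,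
          ← galBeta_sum, hβh, mul_assoc, hcomm, mul_assoc]
      rw [Finset.sum_congr rfl fun i _ => inner i, ← Finset.sum_mul,
        ← galBeta_sum, hβt, Algebra.TensorProduct.tmul_mul_tmul, one_mul]
    rw [hact, eR]
    exact Phi_congr lam βbar hfac hbij T hT (by rw [hβp, hβq])
  · -- (4) module algebra property
    intro h n ha hb hrep m c1 c2 hcom l pa pb qa qb hp hq T U hT hU
    have hβ : galBeta k lam (∑ i, ha i ⊗ₜ[k] hb i) = h ⊗ₜ[k] (1 : K) := (hπγ _ _).1 hrep
    have hβp : ∀ j, galBeta k lam (∑ s, pa j s ⊗ₜ[k] pb j s) = c1 j ⊗ₜ[k] (1 : K) :=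
      fun j => (hπγ _ _).1 (hp j)
    have hβq : ∀ j, galBeta k lam (∑ s, qa j s ⊗ₜ[k] qb j s) = c2 j ⊗ₜ[k] (1 : K) :=
      fun j => (hπγ _ _).1 (hq j)
    set E1 : (K ⊗[k] K) ⊗[k] K := ∑ i, (ha i ⊗ₜ[k] (1 : K)) ⊗ₜ[k] hb i with hE1
    set E2 : (K ⊗[k] K) ⊗[k] K :=
      ∑ j, ∑ s, ∑ s', (pa j s ⊗ₜ[k] (pb j s * qa j s')) ⊗ₜ[k] qb j s' with hE2
    have eL : actOf n ha hb (T ∘ₗ U) = triF (k := k) T U E1 := by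
      rw [hE1, map_sum]
      ext w
      simp only [actOf, LinearMap.sum_apply, LinearMap.comp_apply, sm_apply,
        triF_tmul, Phi_tmul, one_smul]
    have eR : (∑ j, (actOf l (pa j) (pb j) T) ∘ₗ (actOf l (qa j) (qb j) U))
        = triF (k := k) T U E2 := by
      rw [hE2, map_sum]
      ext w
      simp only [actOf, LinearMap.sum_apply, LinearMap.comp_apply, sm_apply,
        map_sum, triF_tmul, Phi_tmul, Finset.smul_sum, mul_smul, Finset.sum_apply]
      exact Finset.sum_congr rfl fun j _ => Finset.sum_comm ..
    have hBE1 : (LinearMap.lTensor H' (galBeta k lam))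
        ((TensorProduct.assoc k H' K K) ((LinearMap.rTensor K (galBeta k lam)) E1))
        = ∑ j, c1 j ⊗ₜ[k] (c2 j ⊗ₜ[k] (1 : K)) := by
      rw [hE1, map_sum, map_sum, map_sum]
      have step : ∀ i : Fin n,
          (LinearMap.lTensor H' (galBeta k lam))
            ((TensorProduct.assoc k H' K K)
              ((LinearMap.rTensor K (galBeta k lam)) ((ha i ⊗ₜ[k] (1 : K)) ⊗ₜ[k] hb i)))
          = (TensorProduct.assoc k H' H' K)
              ((LinearMap.rTensor K (Coalgebra.comul (R := k)))
                (lam (ha i) * ((1 : H') ⊗ₜ[k] hb i))) := by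
        intro i
        rw [LinearMap.rTensor_tmul, galBeta_tmul, ← Algebra.TensorProduct.one_def,
          mul_one, B2_tmul, ← assoc_comul_mul, hcoassoc, LinearEquiv.apply_symm_apply]
      rw [Finset.sum_congr rfl fun i _ => step i, ← map_sum, ← map_sum,
        ← galBeta_sum, hβ, LinearMap.rTensor_tmul, hcom, sum_tmul, map_sum]
      exact Finset.sum_congr rfl fun j _ => TensorProduct.assoc_tmul _ _ _
    have hBE2 : (LinearMap.lTensor H' (galBeta k lam))
        ((TensorProduct.assoc k H' K K) ((LinearMap.rTensor K (galBeta k lam)) E2))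
        = ∑ j, c1 j ⊗ₜ[k] (c2 j ⊗ₜ[k] (1 : K)) := by
      rw [hE2, map_sum, map_sum, map_sum]
      refine Finset.sum_congr rfl fun j _ => ?_
      rw [Finset.sum_comm, map_sum, map_sum, map_sum]
      have inner : ∀ s' : Fin l,
          (LinearMap.lTensor H' (galBeta k lam))
            ((TensorProduct.assoc k H' K K)
              ((LinearMap.rTensor K (galBeta k lam))
                (∑ s, (pa j s ⊗ₜ[k] (pb j s * qa j s')) ⊗ₜ[k] qb j s')))
          = c1 j ⊗ₜ[k] galBeta k lam (qa j s' ⊗ₜ[k] qb j s') := by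
        intro s'
        rw [← sum_tmul, LinearMap.rTensor_tmul]
        have hfirst : galBeta k lam (∑ s, pa j s ⊗ₜ[k] (pb j s * qa j s'))
            = c1 j ⊗ₜ[k] qa j s' := by
          rw [galBeta_sum]
          have e1 : ∀ s : Fin l, lam (pa j s) * ((1 : H') ⊗ₜ[k] (pb j s * qa j s'))
              = lam (pa j s) * ((1 : H') ⊗ₜ[k] pb j s) * ((1 : H') ⊗ₜ[k] qa j s') := by
            intro s
            rw [mul_assoc, Algebra.TensorProduct.tmul_mul_tmul, one_mul]
          rw [Finset.sum_congr rfl fun s _ => e1 s, ← Finset.sum_mul, ← galBeta_sum,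
            hβp j, Algebra.TensorProduct.tmul_mul_tmul, one_mul, mul_one]
        rw [hfirst, TensorProduct.assoc_tmul, LinearMap.lTensor_tmul]
      rw [Finset.sum_congr rfl fun s' _ => inner s', ← tmul_sum, ← map_sum, hβq j]
    rw [eL, eR]
    exact triF_congr lam βbar hfac hbij T U hT hU (by rw [hBE1, hBE2])
  · -- (5) invariants
    intro T hT
    have hepslam : ∀ x : K, epsK (k := k) (lam x) = x := fun x => hcounit x
    constructor
    · intro hinv a w
      obtain ⟨N, hs, bs, hlam⟩ := exists_fin_rep (k := k) (lam a)
      have hex : ∀ mi : Fin N, ∃ (nn : ℕ) (ca cb : Fin nn → K),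
          galBeta k lam (∑ s, ca s ⊗ₜ[k] cb s) = hs mi ⊗ₜ[k] (1 : K) := by
        intro mi
        obtain ⟨z, hz⟩ := galBeta_surj lam βbar hfac hbij (hs mi ⊗ₜ[k] (1 : K))
        obtain ⟨nn, ca, cb, rfl⟩ := exists_fin_rep (k := k) z
        exact ⟨nn, ca, cb, hz⟩
      choose nm ca cb hrep using hex
      have hinvm : ∀ mi, actOf (nm mi) (ca mi) (cb mi) T
          = Coalgebra.counit (R := k) (hs mi) • T :=
        fun mi => hinv (hs mi) (nm mi) (ca mi) (cb mi) ((hπγ _ _).2 (hrep mi))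
      have hkey : galBeta k lam (∑ mi, ∑ s, ca mi s ⊗ₜ[k] (cb mi s * bs mi))
          = galBeta k lam (a ⊗ₜ[k] (1 : K)) := by
        rw [galBeta_tmul, ← Algebra.TensorProduct.one_def, mul_one, hlam, map_sum]
        refine Finset.sum_congr rfl fun mi _ => ?_
        rw [galBeta_sum]
        have e1 : ∀ s, lam (ca mi s) * ((1 : H') ⊗ₜ[k] (cb mi s * bs mi))
            = lam (ca mi s) * ((1 : H') ⊗ₜ[k] cb mi s) * ((1 : H') ⊗ₜ[k] bs mi) := by
          intro s
          rw [mul_assoc, Algebra.TensorProduct.tmul_mul_tmul, one_mul]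
        rw [Finset.sum_congr rfl fun s _ => e1 s, ← Finset.sum_mul, ← galBeta_sum,
          hrep mi, Algebra.TensorProduct.tmul_mul_tmul, one_mul, mul_one]
      have hPhi := Phi_congr lam βbar hfac hbij T hT hkey
      have e2 : Phi (k := k) T (a ⊗ₜ[k] (1 : K)) w = a • T w := by
        simp only [Phi_tmul, LinearMap.comp_apply, sm_apply, one_smul]
      have e4 : ∀ mi, Phi (k := k) T (∑ s, ca mi s ⊗ₜ[k] (cb mi s * bs mi)) w
          = Coalgebra.counit (R := k) (hs mi) • T (bs mi • w) := by
        intro mi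
        have h5 : Phi (k := k) T (∑ s, ca mi s ⊗ₜ[k] (cb mi s * bs mi)) w
            = actOf (nm mi) (ca mi) (cb mi) T (bs mi • w) := by
          rw [map_sum]
          simp only [actOf, LinearMap.sum_apply, LinearMap.comp_apply, sm_apply,
            Phi_tmul, mul_smul]
        rw [h5, hinvm mi, LinearMap.smul_apply]
      have hsum : (∑ mi, Coalgebra.counit (R := k) (hs mi) • bs mi) = a := by
        conv_rhs => rw [← hcounit a]
        rw [hlam, map_sum, map_sum]
        exact Finset.sum_congr rfl fun mi _ => by
          rw [LinearMap.rTensor_tmul, TensorProduct.lid_tmul]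
      have e3 : Phi (k := k) T (∑ mi, ∑ s, ca mi s ⊗ₜ[k] (cb mi s * bs mi)) w
          = T (a • w) := by
        rw [map_sum, LinearMap.sum_apply,
          Finset.sum_congr rfl fun mi _ => e4 mi,
          Finset.sum_congr rfl fun mi _ => by
            rw [← map_smul T (Coalgebra.counit (R := k) (hs mi)) (bs mi • w),
              ← smul_assoc],
          ← map_sum, ← Finset.sum_smul, hsum]
      have hfin := LinearMap.congr_fun hPhi w
      rw [e3, e2] at hfin
      exact hfin
    · intro hK h n ha hb hrep
      have hβ : galBeta k lam (∑ i, ha i ⊗ₜ[k] hb i) = h ⊗ₜ[k] (1 : K) := (hπγ _ _).1 hrep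
      have h2 : epsK (k := k) (galBeta k lam (∑ i, ha i ⊗ₜ[k] hb i))
          = epsK (k := k) (h ⊗ₜ[k] (1 : K)) := by rw [hβ]
      rw [galBeta_sum, map_sum, epsK_tmul,
        Finset.sum_congr rfl fun i _ => by
          rw [epsK_mul_one_tmul, hepslam (ha i)]] at h2
      ext w
      simp only [actOf, LinearMap.sum_apply, LinearMap.comp_apply, sm_apply,
        LinearMap.smul_apply]
      calc ∑ i, ha i • T (hb i • w)
          = ∑ i, (ha i * hb i) • T w :=
            Finset.sum_congr rfl fun i _ => by rw [hK, ← mul_smul]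
        _ = (∑ i, ha i * hb i) • T w := by rw [Finset.sum_smul]
        _ = (Coalgebra.counit (R := k) h • (1 : K)) • T w := by rw [h2]
        _ = Coalgebra.counit (R := k) h • T w := by rw [smul_assoc, one_smul]
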